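/- For a word x in the alphabet of positive integers and a partition λ, the Schur operator product u_x applied to λ is nonzero if and only if for every i ≥ 1, α_i(x) ≤ λ'_i − λ'_{i+1}, where α_i(x) = max over suffixes x̃ of x of (number of occurrences of i+1 in x̃ minus number of occurrences of i in x̃), and λ' denotes the conjugate partition. Moreover, when nonzero, u_x(λ) is the partition whose conjugate has columns λ'_i + w_i(x), where w_i(x) is the number of occurrences of i in x. -/

import Mathlib

/-- A partition, represented by its column lengths (the conjugate):
`c i` is the number of boxes in column `i`. -/
def IsPartition (c : ℕ+ → ℕ) : Prop :=
  (∀ i : ℕ+, c (i + 1) ≤ c i) ∧ ∃ N : ℕ+, ∀ i : ℕ+, N ≤ i → c i = 0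

open Classical in
/-- The Schur operator `u_i`: add a box to column `i` if the result is a
partition, else `none` (representing `0`). -/
noncomputable def addBox (i : ℕ+) (c : ℕ+ → ℕ) : Option (ℕ+ → ℕ) :=
  if IsPartition (Function.update c i (c i + 1)) then
    some (Function.update c i (c i + 1))
  else none

/-- `u_x = u_{x_1} ∘ ⋯ ∘ u_{x_l}` for a word `x = x_1 ⋯ x_l`. -/
noncomputable def schurWord (x : List ℕ+) (c : ℕ+ → ℕ) : Option (ℕ+ → ℕ) :=
  x.foldr (fun i o => o.bind (addBox i)) (some c)

/-- `α_i(x)`: the maximum over suffixes `s` of `x` of `w_{i+1}(s) - w_i(s)`. -/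
def alpha (i : ℕ+) (x : List ℕ+) : ℕ :=
  (x.tails.map (fun s => s.count (i + 1) - s.count i)).foldr max 0

lemma foldr_max_le_iff (l : List ℕ) (b : ℕ) : l.foldr max 0 ≤ b ↔ ∀ a ∈ l, a ≤ b := by
  induction l with
  | nil => simp
  | cons h t ih => simp [max_le_iff, ih]

lemma pnat_lt_succ (b : ℕ+) : b < b + 1 := by
  rw [← PNat.coe_lt_coe]; push_cast; omega

lemma pnat_eq_one_or (a : ℕ+) : a = 1 ∨ ∃ b : ℕ+, b + 1 = a := by
  rcases le_or_gt a 1 with h | h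
  · exact Or.inl (le_antisymm h a.one_le)
  · right
    have ha : 1 < (a:ℕ) := by exact_mod_cast h
    refine ⟨⟨(a:ℕ) - 1, by omega⟩, ?_⟩
    apply PNat.coe_injective
    push_cast
    show ((a:ℕ) - 1) + 1 = (a:ℕ)
    omega

lemma le_foldr_max {l : List ℕ} {a : ℕ} (h : a ∈ l) : a ≤ l.foldr max 0 :=
  (foldr_max_le_iff l (l.foldr max 0)).mp le_rfl a h

lemma count_le_alpha (i : ℕ+) (x : List ℕ+) : x.count (i + 1) - x.count i ≤ alpha i x :=
  le_foldr_max (List.mem_map.mpr ⟨x, by simp, rfl⟩)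

lemma alpha_cons (i a : ℕ+) (t : List ℕ+) :
    alpha i (a :: t) = max ((a :: t).count (i + 1) - (a :: t).count i) (alpha i t) := by
  simp [alpha, List.tails_cons]

lemma count_eventually_zero (t : List ℕ+) : ∃ M : ℕ+, ∀ i : ℕ+, M ≤ i → t.count i = 0 := by
  refine ⟨⟨(t.map (fun j : ℕ+ => (j : ℕ))).foldr max 0 + 1, Nat.succ_pos _⟩, fun i hi => ?_⟩
  rw [List.count_eq_zero]
  intro hmem
  have h0 : (i : ℕ) ∈ t.map (fun j : ℕ+ => (j : ℕ)) := List.mem_map_of_mem (f := fun j : ℕ+ => (j : ℕ)) hmem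
  have h1 : (i : ℕ) ≤ (t.map (fun j : ℕ+ => (j : ℕ))).foldr max 0 := le_foldr_max h0
  have h2 : ((t.map (fun j : ℕ+ => (j : ℕ))).foldr max 0 + 1 : ℕ) ≤ (i : ℕ) := hi
  omega

lemma isPartition_update_iff (c : ℕ+ → ℕ) (hc : IsPartition c) (a : ℕ+) :
    IsPartition (Function.update c a (c a + 1)) ↔ ∀ b : ℕ+, b + 1 = a → c a < c b := by
  constructor
  · intro h b hb
    have hba : b ≠ a := hb ▸ (pnat_lt_succ b).ne
    have := h.1 b
    rw [hb, Function.update_self, Function.update_of_ne hba] at this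
    omega
  · intro h
    constructor
    · intro i
      by_cases h1 : i + 1 = a
      · have hia : i ≠ a := h1 ▸ (pnat_lt_succ i).ne
        rw [h1, Function.update_self, Function.update_of_ne hia]
        exact h i h1
      · by_cases h2 : i = a
        · subst h2
          rw [Function.update_of_ne h1, Function.update_self]
          have := hc.1 i
          omega
        · rw [Function.update_of_ne h1, Function.update_of_ne h2]
          exact hc.1 i
    · obtain ⟨N, hN⟩ := hc.2
      refine ⟨N + a, fun i hi => ?_⟩
      have hia : i ≠ a := by
        have : a < N + a := by
          rw [← PNat.coe_lt_coe]; push_cast; have := N.pos; omega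
        exact (lt_of_lt_of_le this hi).ne'
      rw [Function.update_of_ne hia]
      apply hN
      calc N ≤ N + a := by rw [← PNat.coe_le_coe]; push_cast; omega
      _ ≤ i := hi

lemma isPartition_add (c : ℕ+ → ℕ) (hc : IsPartition c) (t : List ℕ+)
    (h : ∀ i : ℕ+, t.count (i + 1) + c (i + 1) ≤ t.count i + c i) :
    IsPartition (fun i => c i + t.count i) := by
  constructor
  · intro i
    show c (i + 1) + t.count (i + 1) ≤ c i + t.count i
    have := h i; omega
  · obtain ⟨N, hN⟩ := hc.2
    obtain ⟨M, hM⟩ := count_eventually_zero t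
    refine ⟨N + M, fun i hi => ?_⟩
    have h1 : c i = 0 := hN i (le_trans (by rw [← PNat.coe_le_coe]; push_cast; have := M.pos; omega) hi)
    have h2 : t.count i = 0 := hM i (le_trans (by rw [← PNat.coe_le_coe]; push_cast; have := N.pos; omega) hi)
    simp [h1, h2]

lemma main_lemma (x : List ℕ+) : ∀ c : ℕ+ → ℕ, IsPartition c →
    (schurWord x c ≠ none ↔ ∀ i : ℕ+, alpha i x ≤ c i - c (i + 1)) ∧
    ((∀ i : ℕ+, alpha i x ≤ c i - c (i + 1)) →
      schurWord x c = some (fun i => c i + x.count i)) := by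
  induction x with
  | nil =>
    intro c hc
    refine ⟨⟨fun _ i => by simp [alpha], fun _ => by simp [schurWord]⟩, fun _ => by simp [schurWord]⟩
  | cons a t ih =>
    intro c hc
    have hcondt_of : (∀ i : ℕ+, alpha i (a :: t) ≤ c i - c (i + 1)) →
        ∀ i : ℕ+, alpha i t ≤ c i - c (i + 1) := by
      intro h i
      have h1 := h i
      rw [alpha_cons] at h1
      exact le_trans (le_max_right _ _) h1
    have key : (∀ i : ℕ+, alpha i t ≤ c i - c (i + 1)) →
        schurWord t c = some (fun i => c i + t.count i) ∧
          IsPartition (fun i => c i + t.count i) := by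
      intro hcondt
      refine ⟨(ih c hc).2 hcondt, isPartition_add c hc t ?_⟩
      intro i
      have h1 := le_trans (count_le_alpha i t) (hcondt i)
      have h2 := hc.1 i
      omega
    have hsw : schurWord (a :: t) c = (schurWord t c).bind (addBox a) := rfl
    have fwd : (∀ i : ℕ+, alpha i (a :: t) ≤ c i - c (i + 1)) →
        schurWord (a :: t) c = some (fun i => c i + (a :: t).count i) := by
      intro hcond
      have hcondt := hcondt_of hcond
      obtain ⟨hsome, hdpart⟩ := key hcondt
      have hup : IsPartition (Function.update (fun i => c i + t.count i) a
          ((fun i => c i + t.count i) a + 1)) := by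
        rw [isPartition_update_iff _ hdpart a]
        intro b hb
        have hba : b ≠ a := hb ▸ (pnat_lt_succ b).ne
        have h1 := hcond b
        rw [alpha_cons, max_le_iff] at h1
        have h2 := h1.1
        have e1 : (a :: t).count (b + 1) = t.count (b + 1) + 1 := by
          rw [hb]; simp
        have e2 : (a :: t).count b = t.count b := List.count_cons_of_ne (Ne.symm hba)
        have h3 := hc.1 b
        rw [hb] at h3
        show c a + t.count a + 1 ≤ c b + t.count b
        rw [e1, e2, hb] at h2
        omega
      rw [hsw, hsome]
      show addBox a (fun i => c i + t.count i) = some (fun i => c i + (a :: t).count i)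
      rw [addBox, if_pos hup]
      congr 1
      funext i
      by_cases hia : i = a
      · subst hia
        rw [Function.update_self]
        have : (i :: t).count i = t.count i + 1 := List.count_cons_self
        rw [this]
        omega
      · rw [Function.update_of_ne hia]
        have : (a :: t).count i = t.count i := List.count_cons_of_ne (Ne.symm hia)
        rw [this]
    refine ⟨⟨?_, fun h => by rw [fwd h]; simp⟩, fwd⟩
    intro hne i
    rw [hsw] at hne
    have htne : schurWord t c ≠ none := by
      intro h; rw [h] at hne; simp at hne
    have hcondt := (ih c hc).1.mp htne
    obtain ⟨hsome, hdpart⟩ := key hcondt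
    rw [hsome] at hne
    have hne' : addBox a (fun i => c i + t.count i) ≠ none := hne
    have hup : IsPartition (Function.update (fun i => c i + t.count i) a
        ((fun i => c i + t.count i) a + 1)) := by
      by_contra hcon
      rw [addBox, if_neg hcon] at hne'
      exact hne' rfl
    have hkey := (isPartition_update_iff _ hdpart a).mp hup
    rw [alpha_cons, max_le_iff]
    refine ⟨?_, hcondt i⟩
    have hci := hc.1 i
    by_cases hia : a = i + 1
    · subst hia
      have hlt : (fun j => c j + t.count j) (i + 1) < (fun j => c j + t.count j) i := hkey i rfl
      simp only at hlt
      have hne2 : i ≠ i + 1 := (pnat_lt_succ i).ne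
      have e1 : ((i + 1) :: t).count (i + 1) = t.count (i + 1) + 1 := List.count_cons_self
      have e2 : ((i + 1) :: t).count i = t.count i := List.count_cons_of_ne (Ne.symm hne2)
      rw [e1, e2]
      omega
    · have e1 : (a :: t).count (i + 1) = t.count (i + 1) :=
        List.count_cons_of_ne (Ne.symm fun h => hia h.symm)
      have h2 := le_trans (count_le_alpha i t) (hcondt i)
      rcases eq_or_ne i a with rfl | hne3
      · have e2 : (i :: t).count i = t.count i + 1 := List.count_cons_self
        rw [e1, e2]
        omega
      · have e2 : (a :: t).count i = t.count i := List.count_cons_of_ne (Ne.symm hne3)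
        rw [e1, e2]
        omega

theorem stmt0 (x : List ℕ+) (c : ℕ+ → ℕ) (hc : IsPartition c) :
    (schurWord x c ≠ none ↔ ∀ i : ℕ+, alpha i x ≤ c i - c (i + 1)) ∧
    ((∀ i : ℕ+, alpha i x ≤ c i - c (i + 1)) →
      schurWord x c = some (fun i => c i + x.count i)) :=
  main_lemma x c hc
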